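/- Let w be a vector in the light cone 𝕍^{m+1} of Lorentz space 𝕃^{m+2}, v ∈ 𝕍^{m+1} with ⟨v,w⟩ = 1, and C : ℝᵐ → (span{v,w})^⊥ a linear isometry. Then the map Ψ : ℝᵐ → 𝕃^{m+2} given by Ψ(x) = v + Cx - (1/2)‖x‖²w is an isometric embedding into the light cone, its image is {u ∈ 𝕍^{m+1} : ⟨u,w⟩ = 1}, and its second fundamental form is α^Ψ(U,V) = -⟨U,V⟩w. -/

import Mathlib

open scoped InnerProductSpace

noncomputable section

/-- The Lorentzian inner product of signature `(m+1, 1)` on `ℝ^{m+2}`, obtained from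
the Euclidean one by flipping the sign of the contribution of the last coordinate. -/
def lorentz {k : ℕ} (u v : EuclideanSpace ℝ (Fin (k + 1))) : ℝ :=
  ⟪u, v⟫_ℝ - 2 * u (Fin.last k) * v (Fin.last k)

lemma lor_comm {k : ℕ} (u v : EuclideanSpace ℝ (Fin (k+1))) : lorentz u v = lorentz v u := by
  simp only [lorentz]; rw [real_inner_comm]; ring

lemma lor_add_left {k : ℕ} (u u' v : EuclideanSpace ℝ (Fin (k+1))) :
    lorentz (u + u') v = lorentz u v + lorentz u' v := by
  simp only [lorentz, inner_add_left, PiLp.add_apply]; ring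

lemma lor_sub_left {k : ℕ} (u u' v : EuclideanSpace ℝ (Fin (k+1))) :
    lorentz (u - u') v = lorentz u v - lorentz u' v := by
  simp only [lorentz, inner_sub_left, PiLp.sub_apply]; ring

lemma lor_smul_left {k : ℕ} (c : ℝ) (u v : EuclideanSpace ℝ (Fin (k+1))) :
    lorentz (c • u) v = c * lorentz u v := by
  simp only [lorentz, real_inner_smul_left, PiLp.smul_apply, smul_eq_mul]; ring

lemma lor_add_right {k : ℕ} (u v v' : EuclideanSpace ℝ (Fin (k+1))) :
    lorentz u (v + v') = lorentz u v + lorentz u v' := by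
  rw [lor_comm, lor_add_left, lor_comm v u, lor_comm v' u]

lemma lor_sub_right {k : ℕ} (u v v' : EuclideanSpace ℝ (Fin (k+1))) :
    lorentz u (v - v') = lorentz u v - lorentz u v' := by
  rw [lor_comm, lor_sub_left, lor_comm v u, lor_comm v' u]

lemma lor_smul_right {k : ℕ} (c : ℝ) (u v : EuclideanSpace ℝ (Fin (k+1))) :
    lorentz u (c • v) = c * lorentz u v := by
  rw [lor_comm, lor_smul_left, lor_comm]

lemma lor_zero_left {k : ℕ} (v : EuclideanSpace ℝ (Fin (k+1))) : lorentz 0 v = 0 := by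
  simp [lorentz]

/-- derivative of `Ψ` -/
lemma aux_hasFDerivAt {m : ℕ} (w v : EuclideanSpace ℝ (Fin (m+2)))
    (C : EuclideanSpace ℝ (Fin m) →ₗ[ℝ] EuclideanSpace ℝ (Fin (m + 2)))
    (x : EuclideanSpace ℝ (Fin m)) :
    HasFDerivAt (fun y => v + C y - ((1 / 2) * ‖y‖ ^ 2) • w)
      (LinearMap.toContinuousLinearMap C - (innerSL ℝ x).smulRight w) x := by
  have hf1 : HasFDerivAt (fun y : EuclideanSpace ℝ (Fin m) => ((1/2 : ℝ) * ‖y‖ ^ 2))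
      (innerSL ℝ x) x := by
    have h := ((hasFDerivAt_id x).inner ℝ (hasFDerivAt_id x)).const_mul (1/2 : ℝ)
    have he : (fun y : EuclideanSpace ℝ (Fin m) => (1/2 : ℝ) * ⟪id y, id y⟫_ℝ)
        = fun y => (1/2 : ℝ) * ‖y‖ ^ 2 := by
      funext y; rw [id, real_inner_self_eq_norm_sq]
    rw [he] at h
    refine h.congr_fderiv ?_
    ext u
    simp only [ContinuousLinearMap.coe_smul', Pi.smul_apply,
      ContinuousLinearMap.coe_comp', Function.comp_apply, ContinuousLinearMap.prod_apply,
      ContinuousLinearMap.coe_id', id_eq, fderivInnerCLM_apply, innerSL_apply_apply, smul_eq_mul]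
    rw [real_inner_comm u x]
    ring
  have h3 : HasFDerivAt (fun y => v + C y) (LinearMap.toContinuousLinearMap C) x :=
    ((LinearMap.toContinuousLinearMap C).hasFDerivAt).const_add v
  exact h3.sub (hf1.smul_const w)

/-- surjectivity of `C` onto the `lorentz`-orthogonal complement of `span {v, w}` -/
lemma aux_surj {m : ℕ} (w v : EuclideanSpace ℝ (Fin (m+2)))
    (hw0 : lorentz w w = 0) (hv0 : lorentz v v = 0) (hvw : lorentz v w = 1)
    (C : EuclideanSpace ℝ (Fin m) →ₗ[ℝ] EuclideanSpace ℝ (Fin (m + 2)))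
    (hCiso : ∀ x y : EuclideanSpace ℝ (Fin m), lorentz (C x) (C y) = ⟪x, y⟫_ℝ)
    (hCv : ∀ x : EuclideanSpace ℝ (Fin m), lorentz (C x) v = 0)
    (hCw : ∀ x : EuclideanSpace ℝ (Fin m), lorentz (C x) w = 0) :
    ∀ p, lorentz p v = 0 → lorentz p w = 0 → ∃ x, C x = p := by
  have hwv : lorentz w v = 1 := (lor_comm w v).trans hvw
  set φ : EuclideanSpace ℝ (Fin (m+2)) →ₗ[ℝ] ℝ × ℝ :=
    { toFun := fun u => (lorentz u v, lorentz u w),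
      map_add' := fun a b => by simp [lor_add_left],
      map_smul' := fun c a => by simp [lor_smul_left, Prod.smul_mk] } with hφ
  have hker : ∀ p, p ∈ LinearMap.ker φ ↔ lorentz p v = 0 ∧ lorentz p w = 0 := by
    intro p
    simp [hφ, LinearMap.mem_ker, Prod.ext_iff]
  have hsurj : Function.Surjective φ := by
    rintro ⟨a, b⟩
    refine ⟨a • w + b • v, ?_⟩
    simp [hφ, lor_add_left, lor_smul_left, hv0, hw0, hwv, hvw]
  have h1 : Module.finrank ℝ (LinearMap.ker φ) = m := by
    have h2 := LinearMap.finrank_range_add_finrank_ker φ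
    rw [LinearMap.range_eq_top.mpr hsurj] at h2
    simp [finrank_top, finrank_euclideanSpace_fin] at h2
    omega
  have hCinj : Function.Injective C := by
    rw [← LinearMap.ker_eq_bot, eq_bot_iff]
    intro x hx
    have h3 := hCiso x x
    rw [LinearMap.mem_ker.mp hx, lor_zero_left] at h3
    simpa [Submodule.mem_bot] using inner_self_eq_zero.mp h3.symm
  have hfr : Module.finrank ℝ (LinearMap.range C) = m := by
    rw [LinearMap.finrank_range_of_inj hCinj, finrank_euclideanSpace_fin]
  have heq : LinearMap.range C = LinearMap.ker φ := by
    apply Submodule.eq_of_le_of_finrank_le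
    · rintro p ⟨x, rfl⟩
      exact (hker _).mpr ⟨hCv x, hCw x⟩
    · rw [h1, hfr]
  intro p hpv hpw
  have hp : p ∈ LinearMap.range C := by
    rw [heq]; exact (hker p).mpr ⟨hpv, hpw⟩
  exact hp

/-- The map `Ψ(x) = v + Cx - (1/2)‖x‖² w` into the light cone of Lorentz space
`𝕃^{m+2}` is an isometric embedding with image `{u ∈ 𝕍^{m+1} : ⟨u,w⟩ = 1}`, its second
fundamental form is `α^Ψ(U,V) = -⟨U,V⟩ w`, and `w` is normal along `Ψ`. -/
theorem stmt_11 {m : ℕ}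
    (w v : EuclideanSpace ℝ (Fin (m + 2)))
    (hw0 : lorentz w w = 0) (hwne : w ≠ 0)
    (hv0 : lorentz v v = 0) (hvne : v ≠ 0)
    (hvw : lorentz v w = 1)
    (C : EuclideanSpace ℝ (Fin m) →ₗ[ℝ] EuclideanSpace ℝ (Fin (m + 2)))
    (hCiso : ∀ x y : EuclideanSpace ℝ (Fin m), lorentz (C x) (C y) = ⟪x, y⟫_ℝ)
    (hCv : ∀ x : EuclideanSpace ℝ (Fin m), lorentz (C x) v = 0)
    (hCw : ∀ x : EuclideanSpace ℝ (Fin m), lorentz (C x) w = 0) :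
    -- the map `Ψ`
    ∀ Ψ : EuclideanSpace ℝ (Fin m) → EuclideanSpace ℝ (Fin (m + 2)),
      (∀ x, Ψ x = v + C x - ((1 / 2) * ‖x‖ ^ 2) • w) →
      -- `Ψ` is an injective isometric immersion into the light cone
      Function.Injective Ψ ∧
      (∀ (x : EuclideanSpace ℝ (Fin m)) (u₁ u₂ : EuclideanSpace ℝ (Fin m)),
        lorentz (fderiv ℝ Ψ x u₁) (fderiv ℝ Ψ x u₂) = ⟪u₁, u₂⟫_ℝ) ∧
      -- its image is the section `⟨u,w⟩ = 1` of the light cone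
      Set.range Ψ = {u : EuclideanSpace ℝ (Fin (m + 2)) |
        lorentz u u = 0 ∧ u ≠ 0 ∧ lorentz u w = 1} ∧
      -- `w` is normal along `Ψ`, and the second fundamental form is `-⟨u₁,u₂⟩ w`
      (∀ (x : EuclideanSpace ℝ (Fin m)) (u₁ u₂ u₃ : EuclideanSpace ℝ (Fin m)),
        lorentz w (fderiv ℝ Ψ x u₃) = 0 ∧
        fderiv ℝ (fun y => fderiv ℝ Ψ y u₂) x u₁ = -⟪u₁, u₂⟫_ℝ • w) := by
  intro Ψ hΨ
  have hwv : lorentz w v = 1 := (lor_comm w v).trans hvw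
  have hvC : ∀ z, lorentz v (C z) = 0 := fun z => (lor_comm v _).trans (hCv z)
  have hwC : ∀ z, lorentz w (C z) = 0 := fun z => (lor_comm w _).trans (hCw z)
  have hΨfun : Ψ = fun y => v + C y - ((1 / 2) * ‖y‖ ^ 2) • w := funext hΨ
  have hD : ∀ x, HasFDerivAt Ψ
      (LinearMap.toContinuousLinearMap C - (innerSL ℝ x).smulRight w) x := by
    intro x; rw [hΨfun]; exact aux_hasFDerivAt w v C x
  have hfd : ∀ x u, fderiv ℝ Ψ x u = C u - ⟪x, u⟫_ℝ • w := by
    intro x u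
    rw [(hD x).fderiv]
    simp [ContinuousLinearMap.sub_apply, ContinuousLinearMap.smulRight_apply, innerSL_apply_apply,
      LinearMap.coe_toContinuousLinearMap']
  have hΨw : ∀ x, lorentz (Ψ x) w = 1 := by
    intro x
    rw [hΨ]
    simp only [lor_add_left, lor_sub_left, lor_smul_left, hvw, hw0, hCw]
    ring
  refine ⟨?_, ?_, ?_, ?_⟩
  · -- injectivity
    intro x y hxy
    have h1 : ∀ z, ⟪x, z⟫_ℝ = ⟪y, z⟫_ℝ := by
      intro z
      have h2 := congrArg (fun u => lorentz u (C z)) hxy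
      simp only [hΨ, lor_sub_left, lor_add_left, lor_smul_left, hCiso, hvC, hwC] at h2
      linarith
    have h0 : ⟪x - y, x - y⟫_ℝ = (0 : ℝ) := by
      rw [inner_sub_left, h1 (x - y), sub_self]
    have := inner_self_eq_zero.mp h0
    exact sub_eq_zero.mp this
  · -- isometric immersion
    intro x u₁ u₂
    rw [hfd, hfd]
    simp only [lor_sub_left, lor_sub_right, lor_smul_left, lor_smul_right, hCiso, hCw, hwC, hw0]
    ring
  · -- image
    ext u
    constructor
    · rintro ⟨x, rfl⟩
      refine ⟨?_, ?_, hΨw x⟩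
      · rw [hΨ]
        simp only [lor_add_left, lor_add_right, lor_sub_left, lor_sub_right, lor_smul_left,
          lor_smul_right, hv0, hw0, hvw, hwv, hCiso, hvC, hCv, hCw, hwC]
        rw [real_inner_self_eq_norm_sq]
        ring
      · intro h0
        have h1 := hΨw x
        rw [h0, lor_zero_left] at h1
        exact zero_ne_one h1
    · rintro ⟨hu0, hune, huw⟩
      have hvu : lorentz v u = lorentz u v := lor_comm v u
      have hwu : lorentz w u = 1 := (lor_comm w u).trans huw
      set β := lorentz u v with hβ
      obtain ⟨x, hx⟩ := aux_surj w v hw0 hv0 hvw C hCiso hCv hCw (u - v - β • w)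
        (by simp only [lor_sub_left, lor_smul_left, hv0, hwv]; ring)
        (by simp only [lor_sub_left, lor_smul_left, hvw, hw0, huw]; ring)
      have hxx : ⟪x, x⟫_ℝ = -2 * β := by
        have h3 := hCiso x x
        rw [hx] at h3
        simp only [lor_sub_left, lor_sub_right, lor_smul_left, lor_smul_right, hu0, hv0, hw0,
          hvw, hwv, huw, hwu, hvu] at h3
        rw [← h3]; ring
      refine ⟨x, ?_⟩
      rw [hΨ, hx, ← real_inner_self_eq_norm_sq, hxx]
      have h4 : (1/2 : ℝ) * (-2 * β) = -β := by ring
      rw [h4, neg_smul]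
      abel
  · -- second fundamental form
    intro x u₁ u₂ u₃
    constructor
    · rw [hfd]
      simp only [lor_sub_right, lor_smul_right, hwC, hw0]
      ring
    · have hfun : (fun y => fderiv ℝ Ψ y u₂) = fun y => C u₂ - ((innerSL ℝ u₂) y) • w := by
        funext y
        rw [hfd y u₂, innerSL_apply_apply, real_inner_comm]
      rw [hfun]
      have hdd : HasFDerivAt (fun y => C u₂ - ((innerSL ℝ u₂) y) • w)
          (-((innerSL ℝ u₂).smulRight w)) x :=
        ((innerSL ℝ u₂).hasFDerivAt.smul_const w).const_sub (C u₂)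
      rw [hdd.fderiv]
      simp only [ContinuousLinearMap.neg_apply, ContinuousLinearMap.smulRight_apply,
        innerSL_apply_apply, neg_smul]
      rw [real_inner_comm u₂ u₁]

end
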